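/- Let Y : ℝ → ℝ satisfy Y' = -Y² + 11/76. Then for any C₀ ∈ ℝ, the function y = C₀ - (135/19)Y + 60Y³ satisfies the Kuramoto–Sivashinsky travelling-wave equation y''' + y² + y' - 2C₀y + C₀² - 2475/6859 = 0. -/

import Mathlib

/-- If `Y' = -Y² + 11/76`, then `y = C₀ - (135/19)Y + 60Y³` solves the
Kuramoto–Sivashinsky travelling-wave equation
`y''' + y² + y' - 2C₀y + C₀² - 2475/6859 = 0`. -/
theorem ks_exact_solution_alpha2 (Y : ℝ → ℝ) (C₀ : ℝ)
    (hY : Differentiable ℝ Y)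
    (hRic : ∀ z, deriv Y z = -(Y z) ^ 2 + 11 / 76)
    (y : ℝ → ℝ)
    (hydef : y = fun z => C₀ - (135 / 19) * Y z + 60 * (Y z) ^ 3) :
    ∀ z, deriv (deriv (deriv y)) z + (y z) ^ 2 + deriv y z
      - 2 * C₀ * y z + C₀ ^ 2 - 2475 / 6859 = 0 := by
  have hYd : ∀ z, HasDerivAt Y (-(Y z) ^ 2 + 11 / 76) z := by
    intro z
    have := (hY z).hasDerivAt
    rwa [hRic z] at this
  have h1 : ∀ z, HasDerivAt y
      (-180 * (Y z) ^ 4 + (630 / 19) * (Y z) ^ 2 - 1485 / 1444) z := by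
    intro z
    have h := ((((hYd z).const_mul ((135:ℝ)/19)).const_sub C₀).add
      (((hYd z).pow 3).const_mul 60))
    rw [hydef]
    exact h.congr_deriv (by push_cast; ring)
  have hd1 : deriv y = fun z =>
      -180 * (Y z) ^ 4 + (630 / 19) * (Y z) ^ 2 - 1485 / 1444 :=
    funext fun z => (h1 z).deriv
  have h2 : ∀ z, HasDerivAt (deriv y)
      (720 * (Y z) ^ 5 - (3240 / 19) * (Y z) ^ 3 + (3465 / 361) * (Y z)) z := by
    intro z
    have h := ((((hYd z).pow 4).const_mul (-180:ℝ)).add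
      (((hYd z).pow 2).const_mul ((630:ℝ)/19))).sub_const ((1485:ℝ)/1444)
    rw [hd1]
    exact h.congr_deriv (by push_cast; ring)
  have hd2 : deriv (deriv y) = fun z =>
      720 * (Y z) ^ 5 - (3240 / 19) * (Y z) ^ 3 + (3465 / 361) * (Y z) :=
    funext fun z => (h2 z).deriv
  have h3 : ∀ z, HasDerivAt (deriv (deriv y))
      (-3600 * (Y z) ^ 6 + (19620 / 19) * (Y z) ^ 4 - (30195 / 361) * (Y z) ^ 2
        + 38115 / 27436) z := by
    intro z
    have h := ((((hYd z).pow 5).const_mul (720:ℝ)).sub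
      (((hYd z).pow 3).const_mul ((3240:ℝ)/19))).add ((hYd z).const_mul ((3465:ℝ)/361))
    rw [hd2]
    exact h.congr_deriv (by push_cast; ring)
  have hd3 : deriv (deriv (deriv y)) = fun z =>
      -3600 * (Y z) ^ 6 + (19620 / 19) * (Y z) ^ 4 - (30195 / 361) * (Y z) ^ 2
        + 38115 / 27436 :=
    funext fun z => (h3 z).deriv
  intro z
  rw [hd3, hd1, hydef]
  simp only []
  ring
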